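/- Let (s_1, …, s_k) be a maximal block decomposition of a string S with respect to a string T, with the convention that s_0 and s_{k+1} denote the empty string. Fix i ∈ {1, …, k}, write s_i = u x v where x is a single letter and u, v are (possibly empty) strings, let y be a letter that occurs in T, and let S' = s_1 ⋯ s_{i−1} · u y v · s_{i+1} ⋯ s_k be the string obtained from S by substituting y for this occurrence of x. Then there exists a sequence of nonempty strings (t_1, …, t_m) with 1 ≤ m ≤ 5 such that t_1 ⋯ t_m = s_{i−1} u y v s_{i+1}, each t_j is a substring of T, and (s_1, …, s_{i−2}, t_1, …, t_m, s_{i+2}, …, s_k) is a maximal block decomposition of S' with respect to T. Moreover, such a sequence is obtained from the sequence (s_{i−1}, u, y, v, s_{i+1}) (with empty entries removed) by at most four merges of two adjacent entries whose concatenation is a substring of T. -/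

import Mathlib

/-- A block decomposition of `S` with respect to `T`: a sequence of nonempty
strings whose concatenation is `S`, each being a substring of `T`. -/
def IsBlockDecomp {α : Type*} (T : List α) (bs : List (List α)) (S : List α) : Prop :=
  bs.flatten = S ∧ ∀ b ∈ bs, b ≠ [] ∧ b <:+: T

/-- A maximal block decomposition: additionally, the concatenation of any two
consecutive blocks is not a substring of `T`. -/
def IsMaximalBlockDecomp {α : Type*} (T : List α) (bs : List (List α)) (S : List α) : Prop :=
  IsBlockDecomp T bs S ∧
    ∀ i, i + 1 < bs.length → ¬ (bs.getD i [] ++ bs.getD (i + 1) []) <:+: T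

/-- The `j`-th block (1-indexed): `blk bs j = s_j` for `j ∈ {1, …, k}`, and the
empty string for `j ∉ {1, …, k}` (in particular for `j = 0` and `j = k + 1`). -/
def blk {α : Type*} (bs : List (List α)) (j : ℕ) : List α :=
  if j = 0 then [] else bs.getD (j - 1) []

/-- A merge replaces two adjacent entries of a sequence of strings, whose
concatenation is a substring of `T`, by their concatenation. -/
def MergeStep {α : Type*} (T : List α) (xs ys : List (List α)) : Prop :=
  ∃ (l₁ l₂ : List (List α)) (a b : List α),
    xs = l₁ ++ a :: b :: l₂ ∧ ys = l₁ ++ (a ++ b) :: l₂ ∧ (a ++ b) <:+: T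

/-- `MergesWithin T n xs ys` holds when `ys` is obtained from `xs` by at most `n`
merges of adjacent entries whose concatenation is a substring of `T`. -/
def MergesWithin {α : Type*} (T : List α) : ℕ → List (List α) → List (List α) → Prop
  | 0, xs, ys => xs = ys
  | n + 1, xs, ys => xs = ys ∨ ∃ zs, MergeStep T xs zs ∧ MergesWithin T n zs ys


section Aux
variable {α : Type*}

lemma mergesWithin_refl (T : List α) : ∀ (n : ℕ) (xs : List (List α)), MergesWithin T n xs xs
  | 0, xs => rfl
  | _ + 1, xs => Or.inl rfl

lemma mergesWithin_succ (T : List α) :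
    ∀ {n : ℕ} {xs ys : List (List α)}, MergesWithin T n xs ys → MergesWithin T (n + 1) xs ys
  | 0, xs, ys, h => Or.inl h
  | _ + 1, _, _, Or.inl h => Or.inl h
  | n + 1, _, _, Or.inr ⟨zs, hst, h⟩ => Or.inr ⟨zs, hst, mergesWithin_succ T h⟩

lemma mergesWithin_mono (T : List α) {m n : ℕ} (h : m ≤ n) {xs ys : List (List α)}
    (hm : MergesWithin T m xs ys) : MergesWithin T n xs ys := by
  induction h with
  | refl => exact hm
  | step _ ih => exact mergesWithin_succ T ih

lemma not_chain'_decomp {β : Type*} (R : β → β → Prop) (l : List β) (h : ¬ l.IsChain R) :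
    ∃ l₁ a b l₂, l = l₁ ++ a :: b :: l₂ ∧ ¬ R a b := by
  induction l with
  | nil => exact absurd List.isChain_nil h
  | cons a l ih =>
    match l, h, ih with
    | [], h, _ => exact absurd (List.isChain_singleton a) h
    | b :: l', h, ih =>
      rw [List.isChain_cons_cons] at h
      by_cases hr : R a b
      · have hc : ¬ (b :: l').IsChain R := fun hc => h ⟨hr, hc⟩
        obtain ⟨l₁, a', b', l₂, heq, hnr⟩ := ih hc
        exact ⟨a :: l₁, a', b', l₂, by rw [List.cons_append, heq], hnr⟩
      · exact ⟨[], a, b, l', rfl, hr⟩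

lemma filter_flatten_eq (l : List (List α)) :
    (l.filter (fun x => !x.isEmpty)).flatten = l.flatten := by
  induction l with
  | nil => rfl
  | cons a l ih =>
    by_cases ha : a = []
    · subst ha; simpa using ih
    · rw [List.filter_cons, if_pos (by simpa [List.isEmpty_iff] using ha)]
      simp [ih]

lemma merge_exists (T : List α) :
    ∀ (n : ℕ) (xs : List (List α)), xs.length ≤ n → xs ≠ [] →
      (∀ b ∈ xs, b ≠ [] ∧ b <:+: T) →
      ∃ ts : List (List α), ts ≠ [] ∧ ts.length ≤ xs.length ∧ ts.flatten = xs.flatten ∧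
        (∀ t ∈ ts, t ≠ [] ∧ t <:+: T) ∧
        ts.IsChain (fun a b => ¬ (a ++ b) <:+: T) ∧
        MergesWithin T (xs.length - 1) xs ts ∧
        (∀ a ∈ xs.head?, ∃ b ∈ ts.head?, a <+: b) ∧
        (∀ a ∈ xs.getLast?, ∃ b ∈ ts.getLast?, a <:+ b) := by
  intro n
  induction n with
  | zero =>
    intro xs hlen hne _
    rw [Nat.le_zero, List.length_eq_zero_iff] at hlen
    exact absurd hlen hne
  | succ n ih =>
    intro xs hlen hne hmem
    by_cases hc : xs.IsChain (fun a b => ¬ (a ++ b) <:+: T)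
    · exact ⟨xs, hne, le_refl _, rfl, hmem, hc, mergesWithin_refl T _ xs,
        fun a ha => ⟨a, ha, List.prefix_refl a⟩, fun a ha => ⟨a, ha, List.suffix_refl a⟩⟩
    · obtain ⟨l₁, a, b, l₂, heq, hr⟩ := not_chain'_decomp _ xs hc
      rw [not_not] at hr
      set zs := l₁ ++ (a ++ b) :: l₂ with hzs
      clear_value zs
      have hzslen : zs.length + 1 = xs.length := by simp [heq, hzs]; omega
      have hzsne : zs ≠ [] := by simp [hzs]
      have hzsmem : ∀ t ∈ zs, t ≠ [] ∧ t <:+: T := by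
        intro t ht
        rw [hzs, List.mem_append, List.mem_cons] at ht
        rcases ht with h1 | h2 | h3
        · exact hmem t (by rw [heq]; simp [h1])
        · subst h2
          refine ⟨?_, hr⟩
          have ha := hmem a (by rw [heq]; simp)
          simp [ha.1]
        · exact hmem t (by rw [heq]; simp [h3])
      obtain ⟨ts, h1, h2, h3, h4, h5, h6, h7, h8⟩ := ih zs (by omega) hzsne hzsmem
      have hhead : ∀ c, xs.head? = some c → ∃ d, zs.head? = some d ∧ c <+: d := by
        cases l₁ with
        | nil =>
          intro c hc'
          rw [heq] at hc'
          simp at hc'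
          subst hc'
          exact ⟨a ++ b, by simp [hzs], List.prefix_append a b⟩
        | cons p l₁' =>
          intro c hc'
          rw [heq] at hc'
          simp at hc'
          subst hc'
          exact ⟨p, by simp [hzs], List.prefix_refl p⟩
      have hlast : ∀ c, xs.getLast? = some c → ∃ d, zs.getLast? = some d ∧ c <:+ d := by
        cases l₂ with
        | nil =>
          intro c hc'
          rw [heq] at hc'
          simp [List.getLast?_append] at hc'
          subst hc'
          exact ⟨a ++ b, by simp [hzs, List.getLast?_append], List.suffix_append a b⟩
        | cons q l₂' =>
          intro c hc'
          refine ⟨c, ?_, List.suffix_refl c⟩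
          rw [heq] at hc'
          rw [hzs]
          simpa [List.getLast?_append] using hc'
      have hle : ts.length ≤ xs.length := le_trans h2 (Nat.le.intro hzslen)
      refine ⟨ts, h1, hle, ?_, h4, h5, ?_, ?_, ?_⟩
      · rw [h3, heq, hzs]; simp
      · have hstep : MergeStep T xs zs := ⟨l₁, l₂, a, b, heq, hzs, hr⟩
        have h0 : 0 < zs.length := List.length_pos_iff.mpr hzsne
        have hxz : xs.length - 1 = (zs.length - 1) + 1 := by omega
        rw [hxz]
        exact Or.inr ⟨zs, hstep, h6⟩
      · intro c hcx
        obtain ⟨d, hd, hcd⟩ := hhead c hcx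
        obtain ⟨e, he, hde⟩ := h7 d (by rw [Option.mem_def, hd])
        exact ⟨e, he, hcd.trans hde⟩
      · intro c hcx
        obtain ⟨d, hd, hcd⟩ := hlast c hcx
        obtain ⟨e, he, hde⟩ := h8 d (by rw [Option.mem_def, hd])
        exact ⟨e, he, hcd.trans hde⟩

end Aux
/-- Updating a maximal block decomposition after a substitution. Let
`(s_1, …, s_k)` be a maximal block decomposition of `S` with respect to `T`
(with `s_0 = s_{k+1} = ε`), let `s_i = u x v` with `x` a single letter, let `y`
be a letter occurring in `T`, and let `S'` be obtained from `S` by replacing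
this occurrence of `x` by `y`. Then there exists a sequence `(t_1, …, t_m)` of
nonempty substrings of `T`, with `1 ≤ m ≤ 5`, whose concatenation is
`s_{i-1} u y v s_{i+1}`, such that
`(s_1, …, s_{i-2}, t_1, …, t_m, s_{i+2}, …, s_k)` is a maximal block
decomposition of `S'` with respect to `T`; moreover, `(t_1, …, t_m)` is
obtained from `(s_{i-1}, u, y, v, s_{i+1})` (with empty entries removed) by at
most four merges of adjacent entries whose concatenation is a substring of `T`. -/
theorem maximal_block_decomp_update {α : Type*} (S T : List α) (bs : List (List α))
    (hdec : IsMaximalBlockDecomp T bs S)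
    (i : ℕ) (hi1 : 1 ≤ i) (hik : i ≤ bs.length)
    (u v : List α) (x : α) (hsplit : blk bs i = u ++ x :: v)
    (y : α) (hy : y ∈ T)
    (S' : List α)
    (hS' : S' = (bs.take (i - 1)).flatten ++ (u ++ y :: v) ++ (bs.drop i).flatten) :
    ∃ ts : List (List α),
      1 ≤ ts.length ∧ ts.length ≤ 5 ∧
      ts.flatten = blk bs (i - 1) ++ u ++ y :: v ++ blk bs (i + 1) ∧
      (∀ t ∈ ts, t ≠ [] ∧ t <:+: T) ∧
      IsMaximalBlockDecomp T (bs.take (i - 2) ++ ts ++ bs.drop (i + 1)) S' ∧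
      MergesWithin T 4
        (([blk bs (i - 1), u, [y], v, blk bs (i + 1)]).filter (fun l => !l.isEmpty)) ts := by
  classical
  obtain ⟨⟨hflat, hblocks⟩, hmax⟩ := hdec
  have hchain : bs.IsChain (fun a b => ¬ (a ++ b) <:+: T) := by
    rw [List.isChain_iff_getElem]
    intro j hj
    have hj' : j + 1 < bs.length := by omega
    have h := hmax j hj'
    rwa [List.getD_eq_getElem _ _ (by omega : j < bs.length),
      List.getD_eq_getElem _ _ hj'] at h
  have chain_to : ∀ (l : List (List α)), l.IsChain (fun a b => ¬ (a ++ b) <:+: T) →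
      ∀ j, j + 1 < l.length → ¬ (l.getD j [] ++ l.getD (j + 1) []) <:+: T := by
    intro l hl j hj
    rw [List.isChain_iff_getElem] at hl
    have h := hl j (by omega)
    rwa [List.getD_eq_getElem _ _ (by omega : j < l.length), List.getD_eq_getElem _ _ hj]
  have hii : i - 1 < bs.length := by omega
  have hblk_i : blk bs i = bs[i - 1] := by
    show (if i = 0 then [] else bs.getD (i - 1) []) = _
    rw [if_neg (by omega), List.getD_eq_getElem _ _ hii]
  have hblk_i_mem : blk bs i ∈ bs := hblk_i ▸ List.getElem_mem hii
  have hblk_ip : blk bs (i + 1) = bs.getD i [] := by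
    show (if i + 1 = 0 then [] else bs.getD (i + 1 - 1) []) = _
    rw [if_neg (by omega), Nat.add_sub_cancel]
  have hblk_im : 2 ≤ i → blk bs (i - 1) = bs.getD (i - 2) [] := by
    intro h1
    show (if i - 1 = 0 then [] else bs.getD (i - 1 - 1) []) = _
    rw [if_neg (by omega), Nat.sub_sub]
  have hs0_nil : i = 1 → blk bs (i - 1) = [] := by
    intro h1; subst h1; rfl
  have hs0_mem : 2 ≤ i → blk bs (i - 1) ∈ bs := by
    intro h2
    rw [hblk_im h2, List.getD_eq_getElem _ _ (show i - 2 < bs.length by omega)]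
    exact List.getElem_mem _
  have hs2_mem : i < bs.length → blk bs (i + 1) ∈ bs := by
    intro hl
    rw [hblk_ip, List.getD_eq_getElem _ _ hl]
    exact List.getElem_mem _
  have hs2_nil : i = bs.length → blk bs (i + 1) = [] := by
    intro hl
    rw [hblk_ip, List.getD_eq_default _ _ (by omega)]
  set xs : List (List α) :=
    ([blk bs (i - 1), u, [y], v, blk bs (i + 1)]).filter (fun l => !l.isEmpty) with hxs
  clear_value xs
  have hxsmem : ∀ t ∈ xs, t ≠ [] ∧ t <:+: T := by
    intro t ht
    rw [hxs, List.mem_filter] at ht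
    obtain ⟨htm, htb⟩ := ht
    have htne : t ≠ [] := by
      intro h; subst h; simp at htb
    refine ⟨htne, ?_⟩
    have hsiT : blk bs i <:+: T := (hblocks _ hblk_i_mem).2
    simp only [List.mem_cons, List.not_mem_nil, or_false] at htm
    rcases htm with rfl | rfl | rfl | rfl | rfl
    · rcases Nat.lt_or_ge i 2 with h1 | h2
      · exact absurd (hs0_nil (by omega)) htne
      · exact (hblocks _ (hs0_mem h2)).2
    · refine (List.IsPrefix.isInfix ?_).trans hsiT
      rw [hsplit]
      exact List.prefix_append _ _
    · obtain ⟨s, t', hst⟩ := List.append_of_mem hy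
      exact ⟨s, t', by rw [hst]; simp⟩
    · refine (List.IsSuffix.isInfix ?_).trans hsiT
      rw [hsplit]
      exact (List.suffix_cons x _).trans (List.suffix_append _ _)
    · rcases Nat.lt_or_ge i bs.length with hl | hl
      · exact (hblocks _ (hs2_mem hl)).2
      · exact absurd (hs2_nil (by omega)) htne
  have hy5 : [y] ∈ xs := by rw [hxs, List.mem_filter]; exact ⟨by simp, rfl⟩
  have hxsne : xs ≠ [] := fun h => by simp [h] at hy5
  have hxslen : xs.length ≤ 5 := by
    rw [hxs]
    simpa using List.length_filter_le (fun l => !l.isEmpty)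
      [blk bs (i - 1), u, [y], v, blk bs (i + 1)]
  obtain ⟨ts, h1, h2, h3, h4, h5, h6, h7, h8⟩ :=
    merge_exists T xs.length xs le_rfl hxsne hxsmem
  have htsflat : ts.flatten = blk bs (i - 1) ++ u ++ y :: v ++ blk bs (i + 1) := by
    rw [h3, hxs, filter_flatten_eq]
    simp
  have hK1 : (bs.take (i - 1)).flatten = (bs.take (i - 2)).flatten ++ blk bs (i - 1) := by
    rcases Nat.lt_or_ge i 2 with hlt | h2'
    · have hi' : i = 1 := by omega
      subst hi'
      have h0 : blk bs 0 = [] := rfl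
      simp [h0]
    · have h3' : i - 1 = (i - 2) + 1 := by omega
      have hs0g : blk bs (i - 1) = bs[i - 2]'(by omega) := by
        rw [hblk_im h2', List.getD_eq_getElem _ _ (by omega)]
      rw [hs0g]
      conv_lhs => rw [h3']
      rw [List.take_succ, List.getElem?_eq_getElem (show i - 2 < bs.length by omega),
        Option.toList_some, List.flatten_append, List.flatten_cons, List.flatten_nil,
        List.append_nil]
  have hK2 : (bs.drop i).flatten = blk bs (i + 1) ++ (bs.drop (i + 1)).flatten := by
    rcases Nat.lt_or_ge i bs.length with hl | hl
    · rw [List.drop_eq_getElem_cons hl, hblk_ip, List.getD_eq_getElem _ _ hl,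
        List.flatten_cons]
    · have hi' : i = bs.length := by omega
      rw [hs2_nil hi', List.drop_eq_nil_iff.mpr (by omega : bs.length ≤ i),
        List.drop_eq_nil_iff.mpr (by omega : bs.length ≤ i + 1)]
      simp
  have hchainL : (bs.take (i - 2) ++ ts ++ bs.drop (i + 1)).IsChain
      (fun a b => ¬ (a ++ b) <:+: T) := by
    rw [List.append_assoc, List.isChain_append]
    refine ⟨hchain.take _, List.isChain_append.mpr ⟨h5, hchain.drop _, ?_⟩, ?_⟩
    · -- boundary ts / drop (i+1)
      intro p hp q hq
      rw [List.head?_drop, Option.mem_def, List.getElem?_eq_some_iff] at hq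
      obtain ⟨h9, hq2⟩ := hq
      have hil : i < bs.length := by omega
      have hs2e : blk bs (i + 1) = bs[i] := by
        rw [hblk_ip, List.getD_eq_getElem _ _ hil]
      have hs2ne : blk bs (i + 1) ≠ [] := by
        rw [hs2e]; exact (hblocks _ (List.getElem_mem hil)).1
      have hxl : xs.getLast? = some (blk bs (i + 1)) := by
        rw [hxs]
        have he : [blk bs (i - 1), u, [y], v, blk bs (i + 1)]
            = [blk bs (i - 1), u, [y], v] ++ [blk bs (i + 1)] := rfl
        rw [he, List.filter_append]
        have hf : List.filter (fun l => !l.isEmpty) [blk bs (i + 1)] = [blk bs (i + 1)] := by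
          simp [List.filter_cons, hs2ne]
        rw [hf, List.getLast?_append]
        simp
      obtain ⟨d, hd, hsuf⟩ := h8 _ (Option.mem_def.mpr hxl)
      have hpd : p = d := Option.mem_unique hp hd
      subst hpd
      intro hcon
      apply hmax i (by omega)
      rw [List.getD_eq_getElem _ _ hil, List.getD_eq_getElem _ _ h9]
      obtain ⟨w, hw⟩ := hsuf
      have hsub : (bs[i] ++ bs[i + 1]) <:+ p ++ q := by
        rw [← hs2e, hq2]
        exact ⟨w, by rw [← hw]; simp⟩
      exact hsub.isInfix.trans hcon
    · -- boundary take (i-2) / (ts ++ drop (i+1))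
      intro p hp q hq
      have ht1 : ts.head? = some (ts.head h1) := List.head?_eq_head h1
      rw [List.head?_append, ht1, Option.mem_def] at hq
      have hq2 : q = ts.head h1 := by
        simpa using hq.symm
      have htne : bs.take (i - 2) ≠ [] := by
        intro h; rw [h] at hp; simp at hp
      have hi3 : 3 ≤ i := by
        rcases Nat.lt_or_ge i 3 with hlt | hge
        · exact absurd (List.take_eq_nil_iff.mpr (Or.inl (by omega))) htne
        · exact hge
      have hs0ne : blk bs (i - 1) ≠ [] := (hblocks _ (hs0_mem (by omega))).1
      have hxh : xs.head? = some (blk bs (i - 1)) := by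
        rw [hxs, List.filter_cons, if_pos (by simp [hs0ne])]
        rfl
      obtain ⟨d, hd, hpre⟩ := h7 _ (Option.mem_def.mpr hxh)
      have hqd : q = d := by
        rw [Option.mem_def, ht1] at hd
        injection hd with hd'
        exact hq2.trans hd'
      have htk : bs.take (i - 1) = bs.take (i - 2) ++ [blk bs (i - 1)] := by
        have h3' : i - 1 = (i - 2) + 1 := by omega
        have hs0g : blk bs (i - 1) = bs[i - 2]'(by omega) := by
          rw [hblk_im (by omega), List.getD_eq_getElem _ _ (by omega)]
        rw [hs0g]
        conv_lhs => rw [h3']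
        rw [List.take_succ, List.getElem?_eq_getElem (show i - 2 < bs.length by omega)]
        rfl
      have hc2 : (bs.take (i - 2) ++ [blk bs (i - 1)]).IsChain (fun a b => ¬ (a ++ b) <:+: T) := by
        rw [← htk]; exact hchain.take _
      have hRps0 := (List.isChain_append.mp hc2).2.2 p hp (blk bs (i - 1)) (by simp)
      intro hcon
      apply hRps0
      obtain ⟨r, hr⟩ := hpre
      have hsub : (p ++ blk bs (i - 1)) <+: p ++ q := by
        refine ⟨r, ?_⟩
        rw [hqd, ← hr]
        simp
      exact hsub.isInfix.trans hcon
  refine ⟨ts, List.length_pos_iff.mpr h1, le_trans h2 hxslen, htsflat, h4, ⟨⟨?_, ?_⟩, ?_⟩, ?_⟩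
  · -- flatten = S'
    rw [hS']
    simp only [List.flatten_append]
    rw [htsflat, hK1, hK2]
    simp
  · -- blocks
    intro b hb
    simp only [List.mem_append] at hb
    rcases hb with (hb | hb) | hb
    · exact hblocks b (List.take_subset _ _ hb)
    · exact h4 b hb
    · exact hblocks b (List.drop_subset _ _ hb)
  · -- maximality
    exact chain_to _ hchainL
  · -- merges
    exact mergesWithin_mono T (by omega : xs.length - 1 ≤ 4) h6
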